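/- Let P(R) be the space of Borel probability measures on R equipped with the topology of weak convergence. The set D of all probability measures on R that belong to the maximum domain of attraction of some (one-dimensional) extreme value distribution is a set of the first Baire category (i.e., meagre) in P(R). -/

import Mathlib

set_option maxHeartbeats 1000000

open MeasureTheory Filter Topology Set NNReal

/-- The cumulative distribution function of a Borel probability measure on `ℝ`:
`F(x) = μ((-∞, x])`. -/
noncomputable def distrib (μ : ProbabilityMeasure ℝ) (x : ℝ) : ℝ :=
  (μ (Set.Iic x) : ℝ≥0)

/-- The generalized extreme value distribution function `G_γ`, with
`G_γ(x) = exp(-(1+γx)^(-1/γ))` where `1 + γx > 0` (interpreted as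
`G_0(x) = exp(-e^(-x))` when `γ = 0`). -/
noncomputable def evCdf (γ : ℝ) (x : ℝ) : ℝ :=
  if γ = 0 then Real.exp (-Real.exp (-x))
  else if 0 < 1 + γ * x then Real.exp (-(1 + γ * x) ^ (-1 / γ))
  else if 0 < γ then 0 else 1

/-- `μ` belongs to the maximum domain of attraction `D(G_γ)`: there are `a n > 0` and `b n`
such that `(F (a n * x + b n)) ^ n → G_γ x` at every continuity point `x` of `G_γ`. -/
def MemDomAttr (γ : ℝ) (μ : ProbabilityMeasure ℝ) : Prop :=
  ∃ a b : ℕ → ℝ, (∀ n, 0 < a n) ∧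
    ∀ x : ℝ, ContinuousAt (evCdf γ) x →
      Tendsto (fun n : ℕ => distrib μ (a n * x + b n) ^ n) atTop (𝓝 (evCdf γ x))

open ENNReal

lemma distrib_mono (μ : ProbabilityMeasure ℝ) : Monotone (distrib μ) := by
  intro x y hxy
  exact_mod_cast μ.apply_mono (Set.Iic_subset_Iic.2 hxy)

lemma distrib_nonneg (μ : ProbabilityMeasure ℝ) (x : ℝ) : 0 ≤ distrib μ x :=
  (μ (Set.Iic x)).coe_nonneg

lemma distrib_le_one (μ : ProbabilityMeasure ℝ) (x : ℝ) : distrib μ x ≤ 1 := by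
  exact_mod_cast μ.apply_le_one _

lemma distrib_add_tail (μ : ProbabilityMeasure ℝ) (x : ℝ) :
    distrib μ x + ((μ (Set.Ioi x) : ℝ≥0) : ℝ) = 1 := by
  have h : (μ (Set.Iic x) : ℝ≥0∞) + (μ (Set.Ioi x) : ℝ≥0∞) = 1 := by
    rw [μ.ennreal_coeFn_eq_coeFn_toMeasure, μ.ennreal_coeFn_eq_coeFn_toMeasure]
    rw [← measure_union (by simp [Set.disjoint_left]) measurableSet_Ioi]
    simp [Set.Iic_union_Ioi]
  have := congr_arg ENNReal.toReal h
  rw [ENNReal.toReal_add ENNReal.coe_ne_top ENNReal.coe_ne_top, ENNReal.coe_toReal,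
    ENNReal.coe_toReal, ENNReal.toReal_one] at this
  exact this

noncomputable def quant (μ : ProbabilityMeasure ℝ) (p : ℝ) : ℝ :=
  sInf {x | p ≤ distrib μ x}

lemma quant_bounds (μ : ProbabilityMeasure ℝ) {p u v : ℝ}
    (hu : distrib μ u < p) (hv : p ≤ distrib μ v) :
    u ≤ quant μ p ∧ quant μ p ≤ v := by
  have hlb : ∀ x ∈ {x | p ≤ distrib μ x}, u ≤ x := by
    intro x hx
    by_contra hxu
    push_neg at hxu
    exact absurd (le_trans hx (distrib_mono μ hxu.le)) (not_le.2 hu)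
  constructor
  · exact le_csInf ⟨v, hv⟩ hlb
  · exact csInf_le ⟨u, hlb⟩ hv

lemma eventually_distrib_lt {F : ℕ → ℝ} {c c' : ℝ} (hcc' : c < c')
    (hF0 : ∀ n, 0 ≤ F n)
    (h : Tendsto (fun n : ℕ => F n ^ n) atTop (𝓝 (Real.exp (-c')))) :
    ∀ᶠ n : ℕ in atTop, F n < 1 - c / n := by
  have hlim : Tendsto (fun n : ℕ => (1 + (-c) / n) ^ n) atTop (𝓝 (Real.exp (-c))) :=
    Real.tendsto_one_add_div_pow_exp (-c)
  set m := (Real.exp (-c') + Real.exp (-c)) / 2 with hm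
  have h1 : Real.exp (-c') < m := by
    have := Real.exp_lt_exp.2 (neg_lt_neg hcc')
    simp only [hm]; linarith
  have h2 : m < Real.exp (-c) := by
    have := Real.exp_lt_exp.2 (neg_lt_neg hcc')
    simp only [hm]; linarith
  have hA : ∀ᶠ n : ℕ in atTop, F n ^ n < m := h.eventually (eventually_lt_nhds h1)
  have hB : ∀ᶠ n : ℕ in atTop, m < (1 + (-c) / n) ^ n :=
    hlim.eventually (eventually_gt_nhds h2)
  have hC : ∀ᶠ n : ℕ in atTop, (0:ℝ) ≤ 1 - c / n := by
    rcases le_or_gt c 0 with hc | hc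
    · filter_upwards [eventually_ge_atTop 1] with n hn
      have : c / n ≤ 0 := div_nonpos_of_nonpos_of_nonneg hc (Nat.cast_nonneg n)
      linarith
    · filter_upwards [eventually_ge_atTop (⌈c⌉₊ + 1)] with n hn
      have hnc : c ≤ n := by
        calc c ≤ ⌈c⌉₊ := Nat.le_ceil c
        _ ≤ n := by exact_mod_cast Nat.le_of_succ_le hn
      have hn0 : (0:ℝ) < n := lt_of_lt_of_le hc hnc
      rw [sub_nonneg, div_le_one hn0]
      exact hnc
  filter_upwards [hA, hB, hC] with n hn1 hn2 hn3
  by_contra hcon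
  push_neg at hcon
  have : (1 - c / n) ^ n ≤ F n ^ n := pow_le_pow_left₀ hn3 hcon n
  have heq : (1 : ℝ) + (-c) / n = 1 - c / n := by ring
  rw [heq] at hn2
  linarith

lemma eventually_lt_distrib {F : ℕ → ℝ} {c c' : ℝ} (hcc' : c' < c)
    (hF0 : ∀ n, 0 ≤ F n)
    (h : Tendsto (fun n : ℕ => F n ^ n) atTop (𝓝 (Real.exp (-c')))) :
    ∀ᶠ n : ℕ in atTop, 1 - c / n < F n := by
  have hlim : Tendsto (fun n : ℕ => (1 + (-c) / n) ^ n) atTop (𝓝 (Real.exp (-c))) :=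
    Real.tendsto_one_add_div_pow_exp (-c)
  set m := (Real.exp (-c') + Real.exp (-c)) / 2 with hm
  have h1 : m < Real.exp (-c') := by
    have := Real.exp_lt_exp.2 (neg_lt_neg hcc')
    simp only [hm]; linarith
  have h2 : Real.exp (-c) < m := by
    have := Real.exp_lt_exp.2 (neg_lt_neg hcc')
    simp only [hm]; linarith
  have hA : ∀ᶠ n : ℕ in atTop, m < F n ^ n := h.eventually (eventually_gt_nhds h1)
  have hB : ∀ᶠ n : ℕ in atTop, (1 + (-c) / n) ^ n < m :=
    hlim.eventually (eventually_lt_nhds h2)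
  filter_upwards [hA, hB] with n hn1 hn2
  by_contra hcon
  push_neg at hcon
  have : F n ^ n ≤ (1 - c / n) ^ n := pow_le_pow_left₀ (hF0 n) hcon n
  have heq : (1 : ℝ) + (-c) / n = 1 - c / n := by ring
  rw [heq] at hn2
  linarith

/-- The unique `x` with `evCdf γ x = exp (-c)` for `c > 0`. -/
noncomputable def xc (γ : ℝ) (c : ℝ) : ℝ :=
  if γ = 0 then -Real.log c else (c ^ (-γ) - 1) / γ

lemma one_add_xc (γ : ℝ) (hγ : γ ≠ 0) {c : ℝ} : 1 + γ * xc γ c = c ^ (-γ) := by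
  rw [xc, if_neg hγ]
  field_simp
  ring

lemma evCdf_xc {γ c : ℝ} (hc : 0 < c) : evCdf γ (xc γ c) = Real.exp (-c) := by
  rcases eq_or_ne γ 0 with h0 | h0
  · subst h0
    rw [evCdf, if_pos rfl, xc, if_pos rfl, neg_neg, Real.exp_log hc]
  · have hpos : (0:ℝ) < c ^ (-γ) := Real.rpow_pos_of_pos hc _
    rw [evCdf, if_neg h0, one_add_xc γ h0, if_pos hpos, ← Real.rpow_mul hc.le]
    have he : -γ * (-1 / γ) = 1 := by field_simp
    rw [he, Real.rpow_one]

lemma continuousAt_evCdf {γ c : ℝ} (hc : 0 < c) : ContinuousAt (evCdf γ) (xc γ c) := by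
  rcases eq_or_ne γ 0 with h0 | h0
  · subst h0
    have : evCdf 0 = fun x => Real.exp (-Real.exp (-x)) := by
      funext x; rw [evCdf, if_pos rfl]
    rw [this]
    fun_prop
  · have hpos : (0:ℝ) < 1 + γ * xc γ c := by
      rw [one_add_xc γ h0]; exact Real.rpow_pos_of_pos hc _
    have hopen : IsOpen {x : ℝ | 0 < 1 + γ * x} := by
      have : Continuous fun x : ℝ => 1 + γ * x := by fun_prop
      exact isOpen_lt continuous_const this
    have heq : evCdf γ =ᶠ[𝓝 (xc γ c)] fun x => Real.exp (-(1 + γ * x) ^ (-1 / γ)) := by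
      filter_upwards [hopen.mem_nhds hpos] with x hx
      rw [evCdf, if_neg h0, if_pos hx]
    refine ContinuousAt.congr ?_ heq.symm
    have h1 : ContinuousAt (fun x : ℝ => 1 + γ * x) (xc γ c) := by fun_prop
    have h3 : ContinuousAt (fun x : ℝ => (1 + γ * x) ^ (-1 / γ)) (xc γ c) :=
      h1.rpow_const (Or.inl hpos.ne')
    exact (h3.neg).rexp

lemma xc_strict_anti {γ : ℝ} {c c' : ℝ} (hc : 0 < c) (hcc' : c < c') : xc γ c' < xc γ c := by
  rcases eq_or_ne γ 0 with h0 | h0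
  · subst h0
    simp only [xc, if_pos rfl]
    exact neg_lt_neg (Real.log_lt_log hc hcc')
  · simp only [xc, if_neg h0]
    rcases lt_or_gt_of_ne h0 with hneg | hpos
    · have : c ^ (-γ) < c' ^ (-γ) := Real.rpow_lt_rpow hc.le hcc' (by linarith)
      have hg : γ < 0 := hneg
      rw [div_lt_div_right_of_neg hg]
      linarith
    · have : c' ^ (-γ) < c ^ (-γ) := Real.rpow_lt_rpow_of_neg hc hcc' (by linarith)
      rw [div_lt_div_iff_of_pos_right hpos]
      linarith

lemma continuousAt_xc {γ c : ℝ} (hc : 0 < c) : ContinuousAt (xc γ) c := by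
  rcases eq_or_ne γ 0 with h0 | h0
  · subst h0
    have hx : xc 0 = fun c : ℝ => -Real.log c := by
      funext u; rw [xc, if_pos rfl]
    rw [hx]
    exact (Real.continuousAt_log hc.ne').neg
  · have hx : xc γ = fun c : ℝ => (c ^ (-γ) - 1) / γ := by
      funext u; rw [xc, if_neg h0]
    rw [hx]
    have h1 : ContinuousAt (fun c : ℝ => c ^ (-γ)) c :=
      Real.continuousAt_rpow_const _ _ (Or.inl hc.ne')
    exact (h1.sub continuousAt_const).div_const _

noncomputable def rseq (μ : ProbabilityMeasure ℝ) (n : ℕ) : ℝ :=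
  (quant μ (1 - (1/2 : ℝ) / n) - quant μ (1 - (1 : ℝ) / n)) /
    (quant μ (1 - (1 : ℝ) / n) - quant μ (1 - (2 : ℝ) / n))

lemma tendsto_quant_sub_div {μ : ProbabilityMeasure ℝ} {γ : ℝ} {a b : ℕ → ℝ}
    (ha : ∀ n, 0 < a n)
    (hconv : ∀ x : ℝ, ContinuousAt (evCdf γ) x →
      Tendsto (fun n : ℕ => distrib μ (a n * x + b n) ^ n) atTop (𝓝 (evCdf γ x)))
    {c : ℝ} (hc : 0 < c) :
    Tendsto (fun n : ℕ => (quant μ (1 - c / n) - b n) / a n) atTop (𝓝 (xc γ c)) := by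
  rw [Metric.tendsto_atTop]
  intro ε hε
  obtain ⟨δ, hδ, hδ'⟩ := Metric.continuousAt_iff.1 (continuousAt_xc hc) ε hε
  set h' : ℝ := min (δ / 2) (c / 2) with hh'
  have hh'pos : 0 < h' := lt_min (by linarith) (by linarith)
  have hh'c : h' < c := lt_of_le_of_lt (min_le_right _ _) (by linarith)
  have hclose : ∀ u : ℝ, |u - c| ≤ h' → |xc γ u - xc γ c| < ε := by
    intro u hu
    apply hδ'
    rw [Real.dist_eq]
    exact lt_of_le_of_lt (hu.trans (min_le_left _ _)) (by linarith)
  set cm : ℝ := c + h' with hcm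
  set cp : ℝ := c - h' with hcp
  have hcm0 : 0 < cm := by positivity
  have hcp0 : 0 < cp := by simp only [hcp]; linarith
  have hxm := hconv (xc γ cm) (continuousAt_evCdf hcm0)
  have hxp := hconv (xc γ cp) (continuousAt_evCdf hcp0)
  rw [evCdf_xc hcm0] at hxm
  rw [evCdf_xc hcp0] at hxp
  have hlt : ∀ᶠ n : ℕ in atTop, distrib μ (a n * xc γ cm + b n) < 1 - c / n :=
    eventually_distrib_lt (by linarith) (fun n => distrib_nonneg μ _) hxm
  have hgt : ∀ᶠ n : ℕ in atTop, 1 - c / n < distrib μ (a n * xc γ cp + b n) :=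
    eventually_lt_distrib (by linarith) (fun n => distrib_nonneg μ _) hxp
  have hev : ∀ᶠ n : ℕ in atTop,
      dist ((quant μ (1 - c / n) - b n) / a n) (xc γ c) < ε := by
    filter_upwards [hlt, hgt] with n h1 h2
    obtain ⟨hq1, hq2⟩ := quant_bounds μ h1 h2.le
    have han := ha n
    have hl : xc γ cm ≤ (quant μ (1 - c / n) - b n) / a n := by
      rw [le_div_iff₀ han]
      linarith
    have hr : (quant μ (1 - c / n) - b n) / a n ≤ xc γ cp := by
      rw [div_le_iff₀ han]
      linarith
    have hm := hclose cm (by rw [hcm]; simp [abs_of_nonneg hh'pos.le])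
    have hp := hclose cp (by rw [hcp]; simp [abs_of_nonpos, abs_of_nonneg hh'pos.le])
    rw [Real.dist_eq, abs_lt]
    rw [abs_lt] at hm hp
    constructor <;> nlinarith
  rw [eventually_atTop] at hev
  exact hev

lemma exists_tendsto_rseq {μ : ProbabilityMeasure ℝ} {γ : ℝ} (h : MemDomAttr γ μ) :
    ∃ L : ℝ, Tendsto (rseq μ) atTop (𝓝 L) := by
  obtain ⟨a, b, ha, hconv⟩ := h
  have h2 : (0:ℝ) < 2 := by norm_num
  have h1 : (0:ℝ) < 1 := by norm_num
  have hhalf : (0:ℝ) < 1/2 := by norm_num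
  have T1 := tendsto_quant_sub_div ha hconv h2
  have T2 := tendsto_quant_sub_div ha hconv h1
  have T3 := tendsto_quant_sub_div ha hconv hhalf
  have hx12 : xc γ 2 < xc γ 1 := xc_strict_anti h1 (by norm_num)
  have hx23 : xc γ 1 < xc γ (1/2) := xc_strict_anti hhalf (by norm_num)
  refine ⟨(xc γ (1/2) - xc γ 1) / (xc γ 1 - xc γ 2), ?_⟩
  have hnum : Tendsto (fun n : ℕ =>
      (quant μ (1 - (1/2 : ℝ) / n) - b n) / a n - (quant μ (1 - (1 : ℝ) / n) - b n) / a n)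
      atTop (𝓝 (xc γ (1/2) - xc γ 1)) := T3.sub T2
  have hden : Tendsto (fun n : ℕ =>
      (quant μ (1 - (1 : ℝ) / n) - b n) / a n - (quant μ (1 - (2 : ℝ) / n) - b n) / a n)
      atTop (𝓝 (xc γ 1 - xc γ 2)) := T2.sub T1
  have hdiv := hnum.div hden (by linarith)
  refine hdiv.congr fun n => ?_
  have han := (ha n).ne'
  simp only [Pi.div_apply]
  set q3 := quant μ (1 - (1/2 : ℝ) / n)
  set q2 := quant μ (1 - (1 : ℝ) / n)
  set q1 := quant μ (1 - (2 : ℝ) / n)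
  have e1 : (q3 - b n) / a n - (q2 - b n) / a n = (q3 - q2) / a n := by ring
  have e2 : (q2 - b n) / a n - (q1 - b n) / a n = (q2 - q1) / a n := by ring
  rw [rseq, e1, e2]
  rcases eq_or_ne (q2 - q1) 0 with hz | hz
  · rw [hz]
    simp
  · rw [div_div_eq_mul_div, div_mul_cancel₀ _ han]

/-- Piecewise-linear approximation to the indicator of `Iic y`: equals 1 on `Iic y`,
0 outside `Iic (y + 1/8)`. -/
noncomputable def sfn (y : ℝ) : BoundedContinuousFunction ℝ ℝ :=
  BoundedContinuousFunction.ofNormedAddCommGroup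
    (fun x => max 0 (min 1 (1 + 8 * (y - x))))
    (by fun_prop) 1
    (by
      intro x
      rw [Real.norm_eq_abs, abs_le]
      constructor
      · have : (0:ℝ) ≤ max 0 (min 1 (1 + 8 * (y - x))) := le_max_left _ _
        linarith
      · exact max_le (by norm_num) (min_le_left _ _))

lemma sfn_nonneg (y x : ℝ) : 0 ≤ sfn y x := by
  simp only [sfn, BoundedContinuousFunction.coe_ofNormedAddCommGroup]
  exact le_max_left _ _

lemma sfn_le_one (y x : ℝ) : sfn y x ≤ 1 := by
  simp only [sfn, BoundedContinuousFunction.coe_ofNormedAddCommGroup]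
  exact max_le (by norm_num) (min_le_left _ _)

lemma sfn_eq_one {y x : ℝ} (h : x ≤ y) : sfn y x = 1 := by
  simp only [sfn, BoundedContinuousFunction.coe_ofNormedAddCommGroup]
  have h1 : (1:ℝ) ≤ 1 + 8 * (y - x) := by linarith
  rw [min_eq_left h1]
  exact max_eq_right zero_le_one

lemma sfn_eq_zero {y x : ℝ} (h : y + 1/8 ≤ x) : sfn y x = 0 := by
  simp only [sfn, BoundedContinuousFunction.coe_ofNormedAddCommGroup]
  have h1 : 1 + 8 * (y - x) ≤ 0 := by linarith
  rw [max_eq_left]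
  exact le_trans (min_le_right _ _) h1

lemma distrib_eq_toReal (μ : ProbabilityMeasure ℝ) (y : ℝ) :
    distrib μ y = (μ.toMeasure (Set.Iic y)).toReal := by
  rw [distrib, ← μ.ennreal_coeFn_eq_coeFn_toMeasure, ENNReal.coe_toReal]

lemma indicator_integral (μ : ProbabilityMeasure ℝ) (y : ℝ) :
    ∫ x, (Set.Iic y).indicator (1 : ℝ → ℝ) x ∂(μ.toMeasure) = distrib μ y := by
  rw [MeasureTheory.integral_indicator_one measurableSet_Iic, distrib_eq_toReal]
  rfl

lemma distrib_le_integral_sfn (μ : ProbabilityMeasure ℝ) (y : ℝ) :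
    distrib μ y ≤ ∫ x, sfn y x ∂(μ.toMeasure) := by
  rw [← indicator_integral μ y]
  refine MeasureTheory.integral_mono ?_ ((sfn y).integrable _) ?_
  · exact (MeasureTheory.integrable_const (1:ℝ)).indicator measurableSet_Iic
  · intro x
    by_cases hx : x ∈ Set.Iic y
    · rw [Set.indicator_of_mem hx, Pi.one_apply]
      exact (sfn_eq_one hx).ge
    · rw [Set.indicator_of_notMem hx]
      exact sfn_nonneg y x

lemma integral_sfn_le_distrib (μ : ProbabilityMeasure ℝ) (y : ℝ) :
    ∫ x, sfn y x ∂(μ.toMeasure) ≤ distrib μ (y + 1/8) := by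
  rw [← indicator_integral μ (y + 1/8)]
  refine MeasureTheory.integral_mono ((sfn y).integrable _) ?_ ?_
  · exact (MeasureTheory.integrable_const (1:ℝ)).indicator measurableSet_Iic
  · intro x
    by_cases hx : x ∈ Set.Iic (y + 1/8)
    · rw [Set.indicator_of_mem hx, Pi.one_apply]
      exact sfn_le_one y x
    · rw [Set.indicator_of_notMem hx]
      rw [Set.mem_Iic, not_le] at hx
      exact (sfn_eq_zero hx.le).le

/-- A mixture of a measure with three Dirac masses. -/
noncomputable def mix (μ0 : Measure ℝ) (w0 w1 w2 w3 : ℝ≥0) (p1 p2 p3 : ℝ) : Measure ℝ :=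
  (w0 : ℝ≥0∞) • μ0 + (w1 : ℝ≥0∞) • Measure.dirac p1 + (w2 : ℝ≥0∞) • Measure.dirac p2
    + (w3 : ℝ≥0∞) • Measure.dirac p3

lemma mix_apply (μ0 : Measure ℝ) (w0 w1 w2 w3 : ℝ≥0) (p1 p2 p3 : ℝ) {s : Set ℝ}
    (hs : MeasurableSet s) :
    mix μ0 w0 w1 w2 w3 p1 p2 p3 s =
      (w0 : ℝ≥0∞) * μ0 s + (w1 : ℝ≥0∞) * s.indicator 1 p1 + (w2 : ℝ≥0∞) * s.indicator 1 p2
        + (w3 : ℝ≥0∞) * s.indicator 1 p3 := by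
  simp [mix, Measure.add_apply, Measure.smul_apply, Measure.dirac_apply' _ hs, smul_eq_mul]
  rfl

lemma mix_isProbability (μ0 : Measure ℝ) [IsProbabilityMeasure μ0]
    (w0 w1 w2 w3 : ℝ≥0) (p1 p2 p3 : ℝ) (hw : w0 + w1 + w2 + w3 = 1) :
    IsProbabilityMeasure (mix μ0 w0 w1 w2 w3 p1 p2 p3) := by
  constructor
  rw [mix_apply _ _ _ _ _ _ _ _ MeasurableSet.univ]
  simp only [measure_univ, mul_one, Set.indicator_univ, Pi.one_apply]
  rw [← ENNReal.coe_add, ← ENNReal.coe_add, ← ENNReal.coe_add, hw, ENNReal.coe_one]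

lemma mix_integral (μ0 : Measure ℝ) [IsProbabilityMeasure μ0]
    (w0 w1 w2 w3 : ℝ≥0) (p1 p2 p3 : ℝ) (hw : w0 + w1 + w2 + w3 = 1)
    (f : BoundedContinuousFunction ℝ ℝ) :
    ∫ x, f x ∂(mix μ0 w0 w1 w2 w3 p1 p2 p3) =
      (w0 : ℝ) * ∫ x, f x ∂μ0 + (w1 : ℝ) * f p1 + (w2 : ℝ) * f p2 + (w3 : ℝ) * f p3 := by
  have : IsProbabilityMeasure (mix μ0 w0 w1 w2 w3 p1 p2 p3) :=
    mix_isProbability μ0 w0 w1 w2 w3 p1 p2 p3 hw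
  have hint : MeasureTheory.Integrable f (mix μ0 w0 w1 w2 w3 p1 p2 p3) := f.integrable _
  rw [mix] at hint ⊢
  have h3 := hint.right_of_add_measure
  have h012 := hint.left_of_add_measure
  have h2 := h012.right_of_add_measure
  have h01 := h012.left_of_add_measure
  have h1 := h01.right_of_add_measure
  have h0 := h01.left_of_add_measure
  rw [MeasureTheory.integral_add_measure h012 h3, MeasureTheory.integral_add_measure h01 h2,
    MeasureTheory.integral_add_measure h0 h1]
  rw [MeasureTheory.integral_smul_measure, MeasureTheory.integral_smul_measure,
    MeasureTheory.integral_smul_measure, MeasureTheory.integral_smul_measure]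
  rw [MeasureTheory.integral_dirac, MeasureTheory.integral_dirac, MeasureTheory.integral_dirac]
  simp [ENNReal.coe_toReal, smul_eq_mul]

lemma exists_M (μ0 : ProbabilityMeasure ℝ) {η : ℝ} (hη : 0 < η) :
    ∃ M : ℝ, 1 - η ≤ distrib μ0 M := by
  rcases le_or_gt 1 η with h1 | h1
  · exact ⟨0, le_trans (by linarith) (distrib_nonneg μ0 0)⟩
  · have htd : Tendsto (fun x : ℝ => μ0.toMeasure (Set.Iic x)) atTop
        (𝓝 (μ0.toMeasure Set.univ)) := MeasureTheory.tendsto_measure_Iic_atTop _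
    rw [measure_univ] at htd
    have hlt : ENNReal.ofReal (1 - η) < 1 := by
      rw [← ENNReal.ofReal_one]
      exact ENNReal.ofReal_lt_ofReal_iff_of_nonneg (by linarith) |>.2 (by linarith)
    have hev := htd.eventually (eventually_gt_nhds hlt)
    obtain ⟨M, hM⟩ := hev.exists
    refine ⟨M, ?_⟩
    rw [distrib_eq_toReal]
    calc 1 - η = (ENNReal.ofReal (1 - η)).toReal := by
          rw [ENNReal.toReal_ofReal (by linarith)]
      _ ≤ (μ0.toMeasure (Set.Iic M)).toReal := by
          apply ENNReal.toReal_mono (measure_ne_top _ _) hM.le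

lemma mix_distrib (μ0 : ProbabilityMeasure ℝ) (w0 w1 w2 w3 : ℝ≥0) (p1 p2 p3 : ℝ)
    (hw : w0 + w1 + w2 + w3 = 1) (y : ℝ) :
    distrib ⟨mix μ0.toMeasure w0 w1 w2 w3 p1 p2 p3,
        mix_isProbability _ _ _ _ _ _ _ _ hw⟩ y =
      (w0 : ℝ) * distrib μ0 y + (w1 : ℝ) * (if p1 ≤ y then 1 else 0)
        + (w2 : ℝ) * (if p2 ≤ y then 1 else 0) + (w3 : ℝ) * (if p3 ≤ y then 1 else 0) := by
  rw [distrib_eq_toReal]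
  show (mix μ0.toMeasure w0 w1 w2 w3 p1 p2 p3 (Set.Iic y)).toReal = _
  rw [mix_apply _ _ _ _ _ _ _ _ measurableSet_Iic]
  have ht : ∀ p : ℝ, (Set.Iic y).indicator (1 : ℝ → ℝ≥0∞) p = if p ≤ y then 1 else 0 := by
    intro p
    simp [Set.indicator_apply]
  rw [ht, ht, ht]
  have hfin : ∀ (w : ℝ≥0) (p : ℝ), (w : ℝ≥0∞) * (if p ≤ y then 1 else 0) ≠ ⊤ := by
    intro w p
    split_ifs <;> simp
  have h0 : (w0 : ℝ≥0∞) * μ0.toMeasure (Set.Iic y) ≠ ⊤ :=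
    ENNReal.mul_ne_top ENNReal.coe_ne_top (measure_ne_top _ _)
  have h01 : (w0 : ℝ≥0∞) * μ0.toMeasure (Set.Iic y)
      + (w1 : ℝ≥0∞) * (if p1 ≤ y then 1 else 0) ≠ ⊤ :=
    ENNReal.add_ne_top.2 ⟨h0, hfin w1 p1⟩
  have h012 : (w0 : ℝ≥0∞) * μ0.toMeasure (Set.Iic y)
      + (w1 : ℝ≥0∞) * (if p1 ≤ y then 1 else 0)
      + (w2 : ℝ≥0∞) * (if p2 ≤ y then 1 else 0) ≠ ⊤ :=
    ENNReal.add_ne_top.2 ⟨h01, hfin w2 p2⟩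
  rw [ENNReal.toReal_add h012 (hfin w3 p3), ENNReal.toReal_add h01 (hfin w2 p2),
    ENNReal.toReal_add h0 (hfin w1 p1), ENNReal.toReal_mul, ENNReal.toReal_mul,
    ENNReal.toReal_mul, ENNReal.toReal_mul]
  have hite : ∀ p : ℝ, ((if p ≤ y then (1:ℝ≥0∞) else 0)).toReal = if p ≤ y then (1:ℝ) else 0 := by
    intro p
    split_ifs <;> simp
  rw [hite, hite, hite, ENNReal.coe_toReal, ENNReal.coe_toReal, ENNReal.coe_toReal,
    ENNReal.coe_toReal, ← distrib_eq_toReal]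

lemma wsum (k : ℕ) :
    (1 - (k:ℝ≥0)⁻¹) + (3/4) * (k:ℝ≥0)⁻¹ + (1/8) * (k:ℝ≥0)⁻¹ + (1/8) * (k:ℝ≥0)⁻¹ = 1 := by
  set δ : ℝ≥0 := (k:ℝ≥0)⁻¹ with hδdef
  have hδ : δ ≤ 1 := by
    rcases Nat.eq_zero_or_pos k with h | h
    · simp [hδdef, h]
    · rw [hδdef]
      apply inv_le_one_of_one_le₀
      exact_mod_cast h
  have h2 : (3/4 : ℝ≥0) * δ + ((1/8) * δ + (1/8) * δ) = δ := by
    rw [← NNReal.coe_inj]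
    push_cast
    ring
  rw [add_assoc, add_assoc, h2]
  exact tsub_add_cancel_of_le hδ

/-- The perturbed probability measure: mostly `μ0`, with three small atoms far to the right. -/
noncomputable def perturb (μ0 : ProbabilityMeasure ℝ) (k : ℕ) (p1 p2 p3 : ℝ) :
    ProbabilityMeasure ℝ :=
  ⟨mix μ0.toMeasure (1 - (k:ℝ≥0)⁻¹) ((3/4) * (k:ℝ≥0)⁻¹) ((1/8) * (k:ℝ≥0)⁻¹)
      ((1/8) * (k:ℝ≥0)⁻¹) p1 p2 p3,
    mix_isProbability _ _ _ _ _ _ _ _ (wsum k)⟩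

lemma perturb_distrib (μ0 : ProbabilityMeasure ℝ) (k : ℕ) (p1 p2 p3 : ℝ) (y : ℝ) :
    distrib (perturb μ0 k p1 p2 p3) y =
      ((1 - (k:ℝ≥0)⁻¹ : ℝ≥0) : ℝ) * distrib μ0 y
        + ((3/4 : ℝ) * ((k:ℝ≥0)⁻¹ : ℝ≥0)) * (if p1 ≤ y then 1 else 0)
        + ((1/8 : ℝ) * ((k:ℝ≥0)⁻¹ : ℝ≥0)) * (if p2 ≤ y then 1 else 0)
        + ((1/8 : ℝ) * ((k:ℝ≥0)⁻¹ : ℝ≥0)) * (if p3 ≤ y then 1 else 0) := by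
  have := mix_distrib μ0 (1 - (k:ℝ≥0)⁻¹) ((3/4) * (k:ℝ≥0)⁻¹) ((1/8) * (k:ℝ≥0)⁻¹)
    ((1/8) * (k:ℝ≥0)⁻¹) p1 p2 p3 (wsum k) y
  rw [perturb, this]
  push_cast
  ring

lemma tendsto_perturb (μ0 : ProbabilityMeasure ℝ) (p1 p2 p3 : ℕ → ℝ) :
    Tendsto (fun k : ℕ => perturb μ0 k (p1 k) (p2 k) (p3 k)) atTop (𝓝 μ0) := by
  rw [MeasureTheory.ProbabilityMeasure.tendsto_iff_forall_integral_tendsto]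
  intro f
  have hcalc : ∀ k : ℕ, ∫ x, f x ∂((perturb μ0 k (p1 k) (p2 k) (p3 k)) : Measure ℝ) =
      ((1 - (k:ℝ≥0)⁻¹ : ℝ≥0) : ℝ) * ∫ x, f x ∂(μ0 : Measure ℝ)
        + ((3/4 : ℝ≥0) * (k:ℝ≥0)⁻¹ : ℝ≥0) * f (p1 k)
        + ((1/8 : ℝ≥0) * (k:ℝ≥0)⁻¹ : ℝ≥0) * f (p2 k)
        + ((1/8 : ℝ≥0) * (k:ℝ≥0)⁻¹ : ℝ≥0) * f (p3 k) := by
    intro k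
    exact mix_integral μ0.toMeasure _ _ _ _ _ _ _ (wsum k) f
  have hdiff : ∀ k : ℕ, k ≥ 1 →
      ‖∫ x, f x ∂((perturb μ0 k (p1 k) (p2 k) (p3 k)) : Measure ℝ)
        - ∫ x, f x ∂(μ0 : Measure ℝ)‖ ≤ (k:ℝ)⁻¹ * (2 * ‖f‖ + 2 * ‖f‖) := by
    intro k hk
    rw [hcalc k]
    have hδle : ((k:ℝ≥0)⁻¹ : ℝ≥0) ≤ 1 := by
      apply inv_le_one_of_one_le₀
      exact_mod_cast hk
    have hδ : ((1 - (k:ℝ≥0)⁻¹ : ℝ≥0) : ℝ) = 1 - (k:ℝ)⁻¹ := by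
      rw [NNReal.coe_sub hδle]
      push_cast
      ring
    set I : ℝ := ∫ x, f x ∂(μ0 : Measure ℝ) with hI
    have hd0 : (0:ℝ) ≤ (k:ℝ)⁻¹ := by positivity
    have hfn : (0:ℝ) ≤ ‖f‖ := norm_nonneg f
    have hIb : |I| ≤ ‖f‖ := by
      rw [hI, ← Real.norm_eq_abs]
      exact f.norm_integral_le_norm _
    have hf1 : |f (p1 k)| ≤ ‖f‖ := by
      rw [← Real.norm_eq_abs]; exact f.norm_coe_le_norm _
    have hf2 : |f (p2 k)| ≤ ‖f‖ := by
      rw [← Real.norm_eq_abs]; exact f.norm_coe_le_norm _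
    have hf3 : |f (p3 k)| ≤ ‖f‖ := by
      rw [← Real.norm_eq_abs]; exact f.norm_coe_le_norm _
    have he : ((1 - (k:ℝ≥0)⁻¹ : ℝ≥0) : ℝ) * I
        + ((3/4 : ℝ≥0) * (k:ℝ≥0)⁻¹ : ℝ≥0) * f (p1 k)
        + ((1/8 : ℝ≥0) * (k:ℝ≥0)⁻¹ : ℝ≥0) * f (p2 k)
        + ((1/8 : ℝ≥0) * (k:ℝ≥0)⁻¹ : ℝ≥0) * f (p3 k) - I =
        (k:ℝ)⁻¹ * (-I + (3/4) * f (p1 k) + (1/8) * f (p2 k) + (1/8) * f (p3 k)) := by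
      rw [hδ]
      push_cast
      ring
    rw [he, Real.norm_eq_abs, abs_mul, abs_of_nonneg hd0]
    apply mul_le_mul_of_nonneg_left _ hd0
    have h1 := abs_le.1 hIb
    have h2 := abs_le.1 hf1
    have h3 := abs_le.1 hf2
    have h4 := abs_le.1 hf3
    rw [abs_le]
    constructor <;> [linarith; linarith]
  have hzero : Tendsto (fun k : ℕ =>
      ∫ x, f x ∂((perturb μ0 k (p1 k) (p2 k) (p3 k)) : Measure ℝ)
        - ∫ x, f x ∂(μ0 : Measure ℝ)) atTop (𝓝 0) := by
    apply squeeze_zero_norm' (a := fun k : ℕ => (k:ℝ)⁻¹ * (2 * ‖f‖ + 2 * ‖f‖))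
    · filter_upwards [eventually_ge_atTop 1] with k hk
      exact hdiff k hk
    · have := tendsto_inv_atTop_nhds_zero_nat.mul_const (2 * ‖f‖ + 2 * ‖f‖)
      rwa [zero_mul] at this
  have := hzero.add_const (∫ x, f x ∂(μ0 : Measure ℝ))
  rw [zero_add] at this
  refine this.congr fun k => by ring

lemma exists_perturb (μ0 : ProbabilityMeasure ℝ) (q : ℝ) (N : ℕ)
    {U : Set (ProbabilityMeasure ℝ)} (hU : IsOpen U) (hμ0 : μ0 ∈ U) :
    ∃ W : Set (ProbabilityMeasure ℝ), IsOpen W ∧ W.Nonempty ∧ W ⊆ U ∧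
      ∀ μ ∈ W, ∃ n, N ≤ n ∧ 1/4 < |rseq μ n - q| := by
  choose Mf hMf using fun k : ℕ => exists_M μ0 (η := ((48:ℝ) * ((k:ℝ) + 1))⁻¹) (by positivity)
  set τ : ℝ := 2 * |q| + 2 with hτdef
  set p1 : ℕ → ℝ := fun k => Mf k + 1 with hp1def
  set p2 : ℕ → ℝ := fun k => Mf k + 2 with hp2def
  set p3 : ℕ → ℝ := fun k => Mf k + 2 + τ with hp3def
  have htd := tendsto_perturb μ0 p1 p2 p3
  have hevU : ∀ᶠ k : ℕ in atTop, perturb μ0 k (p1 k) (p2 k) (p3 k) ∈ U :=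
    htd (hU.mem_nhds hμ0)
  obtain ⟨k, hkU, hkN1⟩ := (hevU.and (eventually_ge_atTop (max N 1))).exists
  have hk1 : 1 ≤ k := le_trans (le_max_right _ _) hkN1
  have hkN : N ≤ k := le_trans (le_max_left _ _) hkN1
  set n : ℕ := 6 * k with hndef
  set d : ℝ := (k:ℝ)⁻¹ with hddef
  have hkR : (1:ℝ) ≤ (k:ℝ) := by exact_mod_cast hk1
  have hk0 : (k:ℝ) ≠ 0 := by linarith
  have hd0 : 0 < d := by rw [hddef]; positivity
  have hd1 : d ≤ 1 := by rw [hddef, inv_le_one_iff₀]; right; exact hkR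
  have hnR : (n:ℝ) = 6 * (k:ℝ) := by rw [hndef]; push_cast; ring
  have h2n : 2/(n:ℝ) = d/3 := by rw [hnR, hddef]; field_simp; ring
  have h1n : 1/(n:ℝ) = d/6 := by rw [hnR, hddef]; field_simp
  have hhn : (1/2 : ℝ)/(n:ℝ) = d/12 := by rw [hnR, hddef]; field_simp; ring
  have hcast : (((k:ℝ≥0)⁻¹ : ℝ≥0) : ℝ) = d := by rw [hddef]; push_cast; ring
  have hcast0 : ((1 - (k:ℝ≥0)⁻¹ : ℝ≥0) : ℝ) = 1 - d := by
    rw [NNReal.coe_sub (by rw [inv_le_one_iff₀]; right; exact_mod_cast hk1)]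
    rw [hcast]
    simp
  -- the distribution function of the perturbed measure, at relevant points
  set P := perturb μ0 k (p1 k) (p2 k) (p3 k) with hPdef
  have hdistP : ∀ y : ℝ, distrib P y =
      (1 - d) * distrib μ0 y + (3/4 * d) * (if p1 k ≤ y then 1 else 0)
        + (1/8 * d) * (if p2 k ≤ y then 1 else 0)
        + (1/8 * d) * (if p3 k ≤ y then 1 else 0) := by
    intro y
    rw [hPdef, perturb_distrib, hcast, hcast0]
  have hMle : 1 - d/48 ≤ distrib μ0 (Mf k) := by
    refine le_trans ?_ (hMf k)
    have : ((48:ℝ) * ((k:ℝ) + 1))⁻¹ ≤ d/48 := by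
      rw [hddef]
      rw [inv_le_iff_one_le_mul₀ (by positivity)]
      rw [div_mul_eq_mul_div, le_div_iff₀ (by positivity)]
      nlinarith [inv_mul_cancel₀ hk0, inv_nonneg.2 (le_trans zero_le_one hkR)]
    linarith
  have hF0le : ∀ y, distrib μ0 y ≤ 1 := distrib_le_one μ0
  have hF0ge : ∀ y, Mf k ≤ y → 1 - d/48 ≤ distrib μ0 y :=
    fun y hy => le_trans hMle (distrib_mono μ0 hy)
  have hτ2 : 2 ≤ τ := by rw [hτdef]; have := abs_nonneg q; linarith
  -- the six open conditions
  set W : Set (ProbabilityMeasure ℝ) := U ∩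
      ({μ | ∫ x, (sfn (p1 k - 1/4)) x ∂(μ : Measure ℝ) < 1 - 2/(n:ℝ)} ∩
       {μ | 1 - 2/(n:ℝ) < ∫ x, (sfn (p1 k + 1/8)) x ∂(μ : Measure ℝ)} ∩
       ({μ | ∫ x, (sfn (p2 k - 1/4)) x ∂(μ : Measure ℝ) < 1 - 1/(n:ℝ)} ∩
        {μ | 1 - 1/(n:ℝ) < ∫ x, (sfn (p2 k + 1/8)) x ∂(μ : Measure ℝ)} ∩
        ({μ | ∫ x, (sfn (p3 k - 1/4)) x ∂(μ : Measure ℝ) < 1 - (1/2 : ℝ)/(n:ℝ)} ∩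
         {μ | 1 - (1/2 : ℝ)/(n:ℝ) < ∫ x, (sfn (p3 k + 1/8)) x ∂(μ : Measure ℝ)}))) with hWdef
  have hWopen : IsOpen W := by
    have hc : ∀ g : BoundedContinuousFunction ℝ ℝ,
        Continuous fun μ : ProbabilityMeasure ℝ => ∫ x, g x ∂(μ : Measure ℝ) :=
      fun g => MeasureTheory.ProbabilityMeasure.continuous_integral_boundedContinuousFunction g
    refine hU.inter (IsOpen.inter (IsOpen.inter ?_ ?_) (IsOpen.inter (IsOpen.inter ?_ ?_)
      (IsOpen.inter ?_ ?_)))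
    · exact isOpen_lt (hc _) continuous_const
    · exact isOpen_lt continuous_const (hc _)
    · exact isOpen_lt (hc _) continuous_const
    · exact isOpen_lt continuous_const (hc _)
    · exact isOpen_lt (hc _) continuous_const
    · exact isOpen_lt continuous_const (hc _)
  -- P belongs to W
  have hPW : P ∈ W := by
    refine ⟨hkU, ⟨⟨?_, ?_⟩, ⟨?_, ?_⟩, ⟨?_, ?_⟩⟩⟩
    · -- ∫ sfn (p1 - 1/4) < 1 - 2/n
      refine lt_of_le_of_lt (le_trans (integral_sfn_le_distrib P _) (le_of_eq (hdistP _))) ?_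
      rw [if_neg (by rw [hp1def]; simp only; linarith), if_neg (by rw [hp1def, hp2def]; simp only; linarith),
        if_neg (by rw [hp1def, hp3def]; simp only; linarith), h2n]
      have := hF0le (p1 k - 1/4 + 1/8)
      have := distrib_nonneg μ0 (p1 k - 1/4 + 1/8)
      nlinarith
    · -- 1 - 2/n < ∫ sfn (p1 + 1/8)
      refine lt_of_lt_of_le ?_ (distrib_le_integral_sfn P _)
      rw [hdistP]
      rw [if_pos (by rw [hp1def]; simp only; linarith),
        if_neg (by rw [hp1def, hp2def]; simp only; linarith),
        if_neg (by rw [hp1def, hp3def]; simp only; linarith), h2n]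
      have hy := hF0ge (p1 k + 1/8) (by rw [hp1def]; simp only; linarith)
      have hy1 := hF0le (p1 k + 1/8)
      nlinarith [mul_nonneg (by linarith : (0:ℝ) ≤ 1 - d)
        (by linarith : (0:ℝ) ≤ distrib μ0 (p1 k + 1/8) - (1 - d/48))]
    · -- ∫ sfn (p2 - 1/4) < 1 - 1/n
      refine lt_of_le_of_lt (le_trans (integral_sfn_le_distrib P _) (le_of_eq (hdistP _))) ?_
      rw [if_pos (by rw [hp1def, hp2def]; simp only; linarith),
        if_neg (by rw [hp2def]; simp only; linarith),
        if_neg (by rw [hp2def, hp3def]; simp only; linarith), h1n]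
      have hy1 := hF0le (p2 k - 1/4 + 1/8)
      have hy0 := distrib_nonneg μ0 (p2 k - 1/4 + 1/8)
      nlinarith
    · -- 1 - 1/n < ∫ sfn (p2 + 1/8)
      refine lt_of_lt_of_le ?_ (distrib_le_integral_sfn P _)
      rw [hdistP]
      rw [if_pos (by rw [hp1def, hp2def]; simp only; linarith),
        if_pos (by rw [hp2def]; simp only; linarith),
        if_neg (by rw [hp2def, hp3def]; simp only; linarith), h1n]
      have hy := hF0ge (p2 k + 1/8) (by rw [hp2def]; simp only; linarith)
      have hy1 := hF0le (p2 k + 1/8)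
      nlinarith [mul_nonneg (by linarith : (0:ℝ) ≤ 1 - d)
        (by linarith : (0:ℝ) ≤ distrib μ0 (p2 k + 1/8) - (1 - d/48))]
    · -- ∫ sfn (p3 - 1/4) < 1 - (1/2)/n
      refine lt_of_le_of_lt (le_trans (integral_sfn_le_distrib P _) (le_of_eq (hdistP _))) ?_
      rw [if_pos (by rw [hp1def, hp3def]; simp only; linarith),
        if_pos (by rw [hp2def, hp3def]; simp only; linarith),
        if_neg (by rw [hp3def]; simp only; linarith), hhn]
      have hy1 := hF0le (p3 k - 1/4 + 1/8)
      have hy0 := distrib_nonneg μ0 (p3 k - 1/4 + 1/8)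
      nlinarith
    · -- 1 - (1/2)/n < ∫ sfn (p3 + 1/8)
      refine lt_of_lt_of_le ?_ (distrib_le_integral_sfn P _)
      rw [hdistP]
      rw [if_pos (by rw [hp1def, hp3def]; simp only; linarith),
        if_pos (by rw [hp2def, hp3def]; simp only; linarith),
        if_pos (by rw [hp3def]; simp only; linarith), hhn]
      have hy := hF0ge (p3 k + 1/8) (by rw [hp3def]; simp only; linarith)
      have hy1 := hF0le (p3 k + 1/8)
      nlinarith [mul_nonneg (by linarith : (0:ℝ) ≤ 1 - d)
        (by linarith : (0:ℝ) ≤ distrib μ0 (p3 k + 1/8) - (1 - d/48))]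
  refine ⟨W, hWopen, ⟨P, hPW⟩, Set.inter_subset_left, ?_⟩
  intro μ hμ
  obtain ⟨-, ⟨⟨c1, c2⟩, ⟨c3, c4⟩, ⟨c5, c6⟩⟩⟩ := hμ
  refine ⟨n, le_trans hkN (by omega), ?_⟩
  have hu1 : distrib μ (p1 k - 1/4) < 1 - 2/(n:ℝ) :=
    lt_of_le_of_lt (distrib_le_integral_sfn μ _) c1
  have hv1 : 1 - 2/(n:ℝ) ≤ distrib μ (p1 k + 1/8 + 1/8) :=
    le_of_lt (lt_of_lt_of_le c2 (integral_sfn_le_distrib μ _))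
  have hu2 : distrib μ (p2 k - 1/4) < 1 - 1/(n:ℝ) :=
    lt_of_le_of_lt (distrib_le_integral_sfn μ _) c3
  have hv2 : 1 - 1/(n:ℝ) ≤ distrib μ (p2 k + 1/8 + 1/8) :=
    le_of_lt (lt_of_lt_of_le c4 (integral_sfn_le_distrib μ _))
  have hu3 : distrib μ (p3 k - 1/4) < 1 - (1/2 : ℝ)/(n:ℝ) :=
    lt_of_le_of_lt (distrib_le_integral_sfn μ _) c5
  have hv3 : 1 - (1/2 : ℝ)/(n:ℝ) ≤ distrib μ (p3 k + 1/8 + 1/8) :=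
    le_of_lt (lt_of_lt_of_le c6 (integral_sfn_le_distrib μ _))
  obtain ⟨hQ1l, hQ1r⟩ := quant_bounds μ hu1 hv1
  obtain ⟨hQ2l, hQ2r⟩ := quant_bounds μ hu2 hv2
  obtain ⟨hQ3l, hQ3r⟩ := quant_bounds μ hu3 hv3
  set Q1 := quant μ (1 - 2/(n:ℝ)) with hQ1def
  set Q2 := quant μ (1 - 1/(n:ℝ)) with hQ2def
  set Q3 := quant μ (1 - (1/2 : ℝ)/(n:ℝ)) with hQ3def
  have hp1e : p1 k = Mf k + 1 := rfl
  have hp2e : p2 k = Mf k + 2 := rfl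
  have hp3e : p3 k = Mf k + 2 + τ := rfl
  have hd21a : 1/2 ≤ Q2 - Q1 := by rw [hp1e] at hQ1r; rw [hp2e] at hQ2l; linarith
  have hd21b : Q2 - Q1 ≤ 3/2 := by rw [hp1e] at hQ1l; rw [hp2e] at hQ2r; linarith
  have hd32 : 2 * |q| + 3/2 ≤ Q3 - Q2 := by
    rw [hp2e] at hQ2r; rw [hp3e] at hQ3l; rw [hτdef] at hQ3l; linarith
  have hrs : rseq μ n = (Q3 - Q2) / (Q2 - Q1) := by
    rw [rseq, hQ1def, hQ2def, hQ3def]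
  have habs : 0 ≤ |q| := abs_nonneg q
  have hdiv : (2 * |q| + 3/2) / (3/2 : ℝ) ≤ (Q3 - Q2) / (Q2 - Q1) := by
    apply div_le_div₀ (by linarith) (by linarith) (by linarith) (by linarith)
  have hlast : 1/4 < (Q3 - Q2) / (Q2 - Q1) - q := by
    have heq : (2 * |q| + 3/2) / (3/2 : ℝ) = (4 * |q| + 3) / 3 := by ring
    rw [heq] at hdiv
    rcases abs_cases q with ⟨h, _⟩ | ⟨h, _⟩ <;> rw [h] at hdiv <;> linarith
  rw [hrs]
  exact lt_of_lt_of_le hlast (le_abs_self _)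

/-- The closed-ish "trap" sets: measures whose ratio sequence stays within `1/4` of `q`
from time `N` on. -/
def Tset (q : ℚ) (N : ℕ) : Set (ProbabilityMeasure ℝ) :=
  {μ | ∀ n, N ≤ n → |rseq μ n - (q : ℝ)| ≤ 1/4}

lemma Tset_isNowhereDense (q : ℚ) (N : ℕ) : IsNowhereDense (Tset q N) := by
  rw [IsNowhereDense, Set.eq_empty_iff_forall_notMem]
  intro μ0 hμ0
  obtain ⟨W, hWo, ⟨μ', hμ'W⟩, hWU, hWprop⟩ :=
    exists_perturb μ0 (q : ℝ) N isOpen_interior hμ0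
  have hμ'cl : μ' ∈ closure (Tset q N) := interior_subset (hWU hμ'W)
  obtain ⟨ν, hνW, hνT⟩ := mem_closure_iff.1 hμ'cl W hWo hμ'W
  obtain ⟨n, hnN, hn⟩ := hWprop ν hνW
  have h2 := hνT n hnN
  linarith

lemma mem_Tset_of_tendsto {μ : ProbabilityMeasure ℝ} {L : ℝ}
    (h : Tendsto (rseq μ) atTop (𝓝 L)) : ∃ (q : ℚ) (N : ℕ), μ ∈ Tset q N := by
  obtain ⟨q, hq1, hq2⟩ := exists_rat_btwn (show L - 1/8 < L by linarith)
  obtain ⟨N, hN⟩ := Metric.tendsto_atTop.1 h (1/8) (by norm_num)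
  refine ⟨q, N, ?_⟩
  intro n hn
  have hd := hN n hn
  rw [Real.dist_eq, abs_lt] at hd
  rw [abs_le]
  constructor <;> linarith

/-- The set `D` of distributions on `ℝ` in the maximum domain of attraction of some
extreme value distribution is meagre (of the first Baire category) in the space of Borel
probability measures on `ℝ` with the topology of weak convergence. -/
theorem meagre_domain_of_attraction :
    IsMeagre {μ : ProbabilityMeasure ℝ | ∃ γ : ℝ, MemDomAttr γ μ} := by
  rw [isMeagre_iff_countable_union_isNowhereDense]
  refine ⟨Set.range (fun p : ℚ × ℕ => Tset p.1 p.2), ?_, countable_range _, ?_⟩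
  · rintro t ⟨⟨qq, NN⟩, rfl⟩
    exact Tset_isNowhereDense qq NN
  · rintro μ ⟨γ, hγ⟩
    obtain ⟨L, hL⟩ := exists_tendsto_rseq hγ
    obtain ⟨qq, NN, hmem⟩ := mem_Tset_of_tendsto hL
    exact ⟨Tset qq NN, ⟨(qq, NN), rfl⟩, hmem⟩
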